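/- Let K be the valuation ring of a complete non-Archimedean field F. Let b = Σ_{i≥1} b_i x^{-i} with b_i ∈ K, b_i → 0, and f = Σ_{i≥0} f_i x^i ∈ K[[x]]. Define the convolution (b*f)(x) = Σ_{i≥0} (-1)^i b_{i+1} f^{(i)}(x)/i! (convergent coefficientwise). Then (b*f)' = (b*f') = (b'*f), and (1/x)*f = f. -/

import Mathlib

/-- Formal derivative on Laurent series in `1/x`; `b n` is the coefficient of `x^{-(n+1)}`. -/
noncomputable def laurentDeriv (K : Type*) [CommRing K] (b : ℕ → K) : ℕ → K :=
  fun j => match j with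
  | 0 => 0
  | n + 1 => -((n + 1 : ℕ) : K) * b n

/-- Convolution `(b * f)(x) = ∑_{i≥0} (-1)^i b_{i+1} f^{(i)}(x)/i!` of a Laurent series
`b = ∑_{i≥1} b_i x^{-i}` (here `b n` is `b_{n+1}`) and a power series `f`; the `k`-th
coefficient of `f^{(i)}/i!` is `C(i+k, i) f_{i+k}`. -/
noncomputable def laurentConv (F : Type*) [NormedField F] (b : ℕ → F) (f : PowerSeries F) :
    PowerSeries F :=
  PowerSeries.mk fun k => ∑' i : ℕ,
    (-1) ^ i * b i * (Nat.choose (i + k) i : F) * PowerSeries.coeff (i + k) f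

/-- Properties of the convolution over the valuation ring of a complete non-Archimedean
field: `(b*f)' = b*f' = b'*f` and `(1/x)*f = f`. -/
theorem convolution_properties (F : Type*) [NormedField F] [CharZero F] [CompleteSpace F]
    (hna : ∀ x y : F, ‖x + y‖ ≤ max ‖x‖ ‖y‖)
    (b : ℕ → F) (hb : ∀ i, ‖b i‖ ≤ 1)
    (hb0 : Filter.Tendsto b Filter.atTop (nhds 0))
    (f : PowerSeries F) (hf : ∀ k, ‖PowerSeries.coeff k f‖ ≤ 1) :
    PowerSeries.derivativeFun (laurentConv F b f) =
        laurentConv F b (PowerSeries.derivativeFun f) ∧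
    laurentConv F b (PowerSeries.derivativeFun f) = laurentConv F (laurentDeriv F b) f ∧
    laurentConv F (fun i => if i = 0 then (1 : F) else 0) f = f := by
  refine ⟨?_, ?_, ?_⟩
  · ext k
    rw [show ∀ g : PowerSeries F, g.derivativeFun = PowerSeries.derivative F g from fun _ => rfl, PowerSeries.coeff_derivativeFun]
    simp only [show ∀ g : PowerSeries F, g.derivativeFun = PowerSeries.derivative F g from fun _ => rfl, laurentConv, PowerSeries.coeff_mk, PowerSeries.coeff_derivativeFun]
    rw [← tsum_mul_right]
    refine tsum_congr fun i => ?_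
    have h2 : (i + k).choose i = (i + k).choose k := by
      rw [← Nat.choose_symm (Nat.le_add_left k i)]
      congr 1; omega
    have h3 : (i + k + 1).choose i = (i + k + 1).choose (k + 1) := by
      rw [← Nat.choose_symm (show k + 1 ≤ i + k + 1 by omega)]
      congr 1; omega
    have hnat : (i + (k + 1)).choose i * (k + 1) = (i + k).choose i * (i + k + 1) := by
      have h1 := Nat.add_one_mul_choose_eq (i + k) k
      rw [show i + (k + 1) = i + k + 1 from by omega, h3, h2]
      simpa [Nat.succ_eq_add_one, Nat.mul_comm] using h1.symm
    have hcast : ((i + (k + 1)).choose i : F) * ((k : F) + 1) =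
        ((i + k).choose i : F) * ((i : F) + (k : F) + 1) := by
      exact_mod_cast congrArg (fun n : ℕ => (n : F)) hnat
    have h4 : i + (k + 1) = i + k + 1 := by omega
    rw [h4] at hcast ⊢
    push_cast
    push_cast at hcast
    linear_combination ((-1) ^ i * b i * PowerSeries.coeff (i + k + 1) f) * hcast
  · ext k
    simp only [show ∀ g : PowerSeries F, g.derivativeFun = PowerSeries.derivative F g from fun _ => rfl, laurentConv, PowerSeries.coeff_mk, PowerSeries.coeff_derivativeFun]
    set g : ℕ → F := fun j =>
      (-1) ^ j * laurentDeriv F b j * ((j + k).choose j : F) * PowerSeries.coeff (j + k) f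
      with hg
    have hsupp : Function.support g ⊆ Set.range Nat.succ := by
      intro x hx
      rcases x with _ | n
      · exfalso; apply hx; simp [hg, laurentDeriv]
      · exact ⟨n, rfl⟩
    have key := Nat.succ_injective.tsum_eq (f := g) hsupp
    rw [← key]
    refine tsum_congr fun i => ?_
    have hnat : (i + k + 1).choose (i + 1) * (i + 1) = (i + k).choose i * (i + k + 1) := by
      have h1 := Nat.add_one_mul_choose_eq (i + k) i
      simpa [Nat.succ_eq_add_one, Nat.mul_comm] using h1.symm
    have hcast : ((i + k + 1).choose (i + 1) : F) * ((i : F) + 1) =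
        ((i + k).choose i : F) * ((i : F) + (k : F) + 1) := by
      exact_mod_cast congrArg (fun n : ℕ => (n : F)) hnat
    simp only [hg, Nat.succ_eq_add_one, laurentDeriv]
    rw [show i + 1 + k = i + k + 1 from by omega]
    push_cast
    push_cast at hcast
    linear_combination (-(-1) ^ i * b i * PowerSeries.coeff (i + k + 1) f) * hcast
  · ext k
    simp only [laurentConv, PowerSeries.coeff_mk]
    rw [tsum_eq_single 0]
    · simp
    · intro i hi
      simp [hi]
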